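/- In the no-data setup with α ∈ (0,1) and r ∈ [0,1]: for every treatment rule δ ∈ [0,1] there exist a0, a1 ∈ [0,1] such that R(δ, (Ber(a0), Ber(a1))) = 1. Consequently, for every δ ∈ [0,1], the supremum over all states (μ0, μ1) of R(δ, (μ0, μ1)) equals 1 and is attained, and every treatment rule is minimax regret. -/
import Mathlib


open MeasureTheory Set

noncomputable section

/-- The set of `α`-quantiles of a Borel probability measure on `[0,1]`
(represented as a measure on `ℝ` giving mass 1 to `[0,1]`). -/
def quantSet (α : ℝ) (μ : Measure ℝ) : Set ℝ :=
  {q | q ∈ Icc (0 : ℝ) 1 ∧ α ≤ (μ (Icc 0 q)).toReal ∧ 1 - α ≤ (μ (Icc q 1)).toReal}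

/-- The `(α, r)`-quantile of `μ`: `r · sup Q(α,μ) + (1 - r) · inf Q(α,μ)`. -/
def quant (α r : ℝ) (μ : Measure ℝ) : ℝ :=
  r * sSup (quantSet α μ) + (1 - r) * sInf (quantSet α μ)

/-- `μ` is a Borel probability measure concentrated on `[0,1]`. -/
def IsProb01 (μ : Measure ℝ) : Prop :=
  IsProbabilityMeasure μ ∧ μ (Icc (0 : ℝ) 1) = 1

/-- The mixture `p · μ1 + (1 - p) · μ0`. -/
def mix (p : ℝ) (μ0 μ1 : Measure ℝ) : Measure ℝ :=
  ENNReal.ofReal p • μ1 + ENNReal.ofReal (1 - p) • μ0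

/-- The "Bernoulli" measure on `[0,1]`: mass `a` at `0` and mass `1 - a` at `1`. -/
def Ber (a : ℝ) : Measure ℝ :=
  ENNReal.ofReal a • Measure.dirac (0 : ℝ) + ENNReal.ofReal (1 - a) • Measure.dirac (1 : ℝ)

/-- Regret in the no-data setup. -/
def regretND (α r δ : ℝ) (μ0 μ1 : Measure ℝ) : ℝ :=
  max (quant α r μ0) (quant α r μ1) - quant α r (mix δ μ0 μ1)

/-- The set of regret values of the rule `δ` over all states. -/
def regretSetND (α r δ : ℝ) : Set ℝ :=
  {v | ∃ μ0 μ1 : Measure ℝ, IsProb01 μ0 ∧ IsProb01 μ1 ∧ v = regretND α r δ μ0 μ1}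

lemma Ber_apply (a : ℝ) (s : Set ℝ) :
    Ber a s = ENNReal.ofReal a * s.indicator 1 0 + ENNReal.ofReal (1 - a) * s.indicator 1 1 := by
  simp [Ber, Measure.dirac_apply, smul_eq_mul]

lemma Ber_Icc0_lt (a : ℝ) (q : ℝ) (ha : 0 ≤ a) (hq : 0 ≤ q) (hq1 : q < 1) :
    ((Ber a) (Icc 0 q)).toReal = a := by
  rw [Ber_apply]
  rw [indicator_of_mem (by simp [hq]), indicator_of_notMem (by simp; linarith)]
  simp [ENNReal.toReal_ofReal ha]

lemma Ber_Icc1_gt (a : ℝ) (q : ℝ) (ha : a ≤ 1) (hq : 0 < q) (hq1 : q ≤ 1) :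
    ((Ber a) (Icc q 1)).toReal = 1 - a := by
  rw [Ber_apply]
  rw [indicator_of_notMem (by simp; linarith), indicator_of_mem (by simp [hq1])]
  simp [ENNReal.toReal_ofReal (by linarith : (0:ℝ) ≤ 1 - a)]

lemma Ber_Icc_full (a : ℝ) (ha : 0 ≤ a) (ha1 : a ≤ 1) (s : Set ℝ)
    (h0 : (0:ℝ) ∈ s) (h1 : (1:ℝ) ∈ s) : (Ber a) s = 1 := by
  rw [Ber_apply, indicator_of_mem h0, indicator_of_mem h1]
  simp only [Pi.one_apply, mul_one]
  rw [← ENNReal.ofReal_add ha (by linarith)]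
  norm_num

lemma isProb01_Ber (a : ℝ) (ha : 0 ≤ a) (ha1 : a ≤ 1) : IsProb01 (Ber a) := by
  refine ⟨⟨?_⟩, ?_⟩
  · exact Ber_Icc_full a ha ha1 univ (mem_univ _) (mem_univ _)
  · exact Ber_Icc_full a ha ha1 _ (by norm_num) (by norm_num)

lemma quantSet_Ber_gt (α a : ℝ) (hα : 0 < α) (h : α < a) (ha1 : a ≤ 1) :
    quantSet α (Ber a) = {0} := by
  ext q
  simp only [quantSet, mem_setOf_eq, mem_singleton_iff, mem_Icc]
  constructor
  · rintro ⟨⟨hq0, hq1⟩, _, h2⟩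
    by_contra hne
    have hqpos : 0 < q := lt_of_le_of_ne hq0 (Ne.symm hne)
    rw [Ber_Icc1_gt a q ha1 hqpos hq1] at h2
    linarith
  · rintro rfl
    refine ⟨⟨le_refl 0, by norm_num⟩, ?_, ?_⟩
    · rw [Ber_Icc0_lt a 0 (by linarith) le_rfl (by norm_num)]; linarith
    · rw [show ((Ber a) (Icc (0:ℝ) 1)) = 1 from
        Ber_Icc_full a (by linarith) ha1 _ (by norm_num) (by norm_num)]
      simp; linarith

lemma quantSet_Ber_lt (α a : ℝ) (hα : α < 1) (h : a < α) (ha0 : 0 ≤ a) :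
    quantSet α (Ber a) = {1} := by
  ext q
  simp only [quantSet, mem_setOf_eq, mem_singleton_iff, mem_Icc]
  constructor
  · rintro ⟨⟨hq0, hq1⟩, h1, _⟩
    by_contra hne
    have hqlt : q < 1 := lt_of_le_of_ne hq1 hne
    rw [Ber_Icc0_lt a q ha0 hq0 hqlt] at h1
    linarith
  · rintro rfl
    refine ⟨⟨by norm_num, le_rfl⟩, ?_, ?_⟩
    · rw [show ((Ber a) (Icc (0:ℝ) 1)) = 1 from
        Ber_Icc_full a ha0 (by linarith) _ (by norm_num) (by norm_num)]
      simp; linarith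
    · rw [Ber_Icc1_gt a 1 (by linarith) (by norm_num) le_rfl]; linarith

lemma quant_Ber_gt (α r a : ℝ) (hα : 0 < α) (h : α < a) (ha1 : a ≤ 1) :
    quant α r (Ber a) = 0 := by
  rw [quant, quantSet_Ber_gt α a hα h ha1, csSup_singleton, csInf_singleton]
  ring

lemma quant_Ber_lt (α r a : ℝ) (hα : α < 1) (h : a < α) (ha0 : 0 ≤ a) :
    quant α r (Ber a) = 1 := by
  rw [quant, quantSet_Ber_lt α a hα h ha0, csSup_singleton, csInf_singleton]
  ring

lemma quant_mem_Icc (α r : ℝ) (hr : r ∈ Icc (0:ℝ) 1) (μ : Measure ℝ) :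
    quant α r μ ∈ Icc (0:ℝ) 1 := by
  obtain ⟨hr0, hr1⟩ := hr
  rcases (quantSet α μ).eq_empty_or_nonempty with h | h
  · simp [quant, h, Real.sSup_empty, Real.sInf_empty]
  · have hsub : quantSet α μ ⊆ Icc 0 1 := fun q hq => hq.1
    have hbddA : BddAbove (quantSet α μ) := ⟨1, fun x hx => (hsub hx).2⟩
    have hbddB : BddBelow (quantSet α μ) := ⟨0, fun x hx => (hsub hx).1⟩
    obtain ⟨x, hx⟩ := h
    have hs1 : sSup (quantSet α μ) ≤ 1 := csSup_le ⟨x, hx⟩ (fun y hy => (hsub hy).2)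
    have hi0 : 0 ≤ sInf (quantSet α μ) := le_csInf ⟨x, hx⟩ (fun y hy => (hsub hy).1)
    have hs0 : 0 ≤ sSup (quantSet α μ) := le_trans ((hsub hx).1) (le_csSup hbddA hx)
    have hi1 : sInf (quantSet α μ) ≤ 1 := le_trans (csInf_le hbddB hx) (hsub hx).2
    constructor
    · have := mul_nonneg hr0 hs0
      have := mul_nonneg (by linarith : (0:ℝ) ≤ 1 - r) hi0
      simp [quant]; linarith
    · simp only [quant]
      nlinarith

lemma mix_Ber (δ a0 a1 : ℝ) (hδ0 : 0 ≤ δ) (hδ1 : δ ≤ 1)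
    (h00 : 0 ≤ a0) (h01 : a0 ≤ 1) (h10 : 0 ≤ a1) (h11 : a1 ≤ 1) :
    mix δ (Ber a0) (Ber a1) = Ber (δ * a1 + (1 - δ) * a0) := by
  unfold mix Ber
  rw [smul_add, smul_add, smul_smul, smul_smul, smul_smul, smul_smul,
    ← ENNReal.ofReal_mul hδ0, ← ENNReal.ofReal_mul hδ0,
    ← ENNReal.ofReal_mul (by linarith : (0:ℝ) ≤ 1 - δ),
    ← ENNReal.ofReal_mul (by linarith : (0:ℝ) ≤ 1 - δ),
    show (1 : ℝ) - (δ * a1 + (1 - δ) * a0) = δ * (1 - a1) + (1 - δ) * (1 - a0) by ring,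
    ENNReal.ofReal_add (by nlinarith) (by nlinarith),
    ENNReal.ofReal_add (by nlinarith) (by nlinarith),
    add_smul, add_smul]
  abel
lemma exists_regret_one (α r : ℝ) (hα : α ∈ Ioo (0 : ℝ) 1) (hr : r ∈ Icc (0 : ℝ) 1)
    (δ : ℝ) (hδ : δ ∈ Icc (0 : ℝ) 1) :
    ∃ a0 ∈ Icc (0 : ℝ) 1, ∃ a1 ∈ Icc (0 : ℝ) 1,
      regretND α r δ (Ber a0) (Ber a1) = 1 := by
  obtain ⟨hα0, hα1⟩ := hα
  obtain ⟨hδ0, hδ1⟩ := hδ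
  rcases eq_or_lt_of_le hδ1 with hδe | hδlt
  · -- δ = 1 : take a0 = 0, a1 = 1
    subst hδe
    refine ⟨0, by norm_num, 1, by norm_num, ?_⟩
    rw [regretND, mix_Ber 1 0 1 hδ0 le_rfl le_rfl (by norm_num) (by norm_num) le_rfl]
    rw [show (1:ℝ) * 1 + (1 - 1) * 0 = (1:ℝ) by ring]
    rw [quant_Ber_lt α r 0 hα1 hα0 le_rfl, quant_Ber_gt α r 1 hα0 hα1 le_rfl]
    norm_num
  · -- δ < 1 : take a0 = 1, a1 = t with t < α and δ t + (1-δ) > α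
    obtain ⟨t, ht⟩ : ∃ t : ℝ, t = α * (1 - (1 - δ) * (1 - α) / 2) := ⟨_, rfl⟩
    have hx : 0 < (1 - δ) * (1 - α) := mul_pos (by linarith) (by linarith)
    have hx1 : (1 - δ) * (1 - α) ≤ 1 := by nlinarith
    have ht0 : 0 ≤ t := by rw [ht]; apply mul_nonneg (le_of_lt hα0); linarith
    have htα : t < α := by rw [ht]; nlinarith
    have ht1 : t ≤ 1 := le_trans (le_of_lt htα) (le_of_lt hα1)
    have hb : α < δ * t + (1 - δ) * 1 := by rw [ht]; nlinarith [mul_nonneg hδ0 (le_of_lt hα0)]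
    have hb1 : δ * t + (1 - δ) * 1 ≤ 1 := by nlinarith
    refine ⟨1, by norm_num, t, ⟨ht0, ht1⟩, ?_⟩
    rw [regretND, mix_Ber δ 1 t hδ0 hδ1 (by norm_num) le_rfl ht0 ht1]
    rw [quant_Ber_gt α r 1 hα0 hα1 le_rfl, quant_Ber_lt α r t hα1 htα ht0,
      quant_Ber_gt α r _ hα0 hb hb1]
    norm_num

/-- in the no-data setup with `α ∈ (0,1)`, for every rule `δ ∈ [0,1]` there are
Bernoulli marginals giving regret 1; hence the supremum of regret over states equals 1, is
attained, and every rule is minimax regret. -/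
theorem stmt3 (α r : ℝ) (hα : α ∈ Ioo (0 : ℝ) 1) (hr : r ∈ Icc (0 : ℝ) 1)
    (δ : ℝ) (hδ : δ ∈ Icc (0 : ℝ) 1) :
    (∃ a0 ∈ Icc (0 : ℝ) 1, ∃ a1 ∈ Icc (0 : ℝ) 1,
        regretND α r δ (Ber a0) (Ber a1) = 1) ∧
    IsGreatest (regretSetND α r δ) 1 ∧
    (∀ δ' ∈ Icc (0 : ℝ) 1, sSup (regretSetND α r δ) ≤ sSup (regretSetND α r δ')) := by
  have hgreat : ∀ δ' ∈ Icc (0:ℝ) 1, IsGreatest (regretSetND α r δ') 1 := by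
    intro δ' hδ'
    obtain ⟨a0, ha0, a1, ha1, hreg⟩ := exists_regret_one α r hα hr δ' hδ'
    constructor
    · exact ⟨Ber a0, Ber a1, isProb01_Ber a0 ha0.1 ha0.2, isProb01_Ber a1 ha1.1 ha1.2,
        hreg.symm⟩
    · rintro v ⟨μ0, μ1, _, _, rfl⟩
      have h0 := quant_mem_Icc α r hr μ0
      have h1 := quant_mem_Icc α r hr μ1
      have hm := quant_mem_Icc α r hr (mix δ' μ0 μ1)
      rw [regretND]
      have : max (quant α r μ0) (quant α r μ1) ≤ 1 := max_le h0.2 h1.2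
      linarith [hm.1]
  refine ⟨exists_regret_one α r hα hr δ hδ, hgreat δ hδ, ?_⟩
  intro δ' hδ'
  rw [(hgreat δ hδ).csSup_eq, (hgreat δ' hδ').csSup_eq]
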